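/- Let x be an even nonnegative integer and let U, D, B ⊆ {1,…,⌊N/2⌋} with n=|U∪D|, N=x+1+2n, B∩(U∪D)=∅ and 2|B| ≤ x. Write u=|U|, d=|D|, m=2n−u−d and D̄={N+1−t : t∈D}, and assume the central position (N+1)/2 does not belong to U∪D∪B. Then M_c(CS_{x,1}(U;D;B)) = M(T_{1+u+d, x+m}(U ∪ D̄ ∪ {(N+1)/2})), i.e. the number of centrally symmetric lozenge tilings of CS_{x,1}(U;D;B) equals the number of lozenge tilings of the dented semihexagon with north side x+m, slanted sides 1+u+d, base N, and dents at the positions of U ∪ D̄ ∪ {(N+1)/2}. -/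

import Mathlib

open Finset

namespace Shuf

/-- A unit triangle of the triangular lattice: `(a, b, o)` where `o = false` is the
up-pointing unit triangle with vertices `(a,b), (a+1,b), (a,b+1)` (in the lattice
coordinates whose embedding is `(a,b) ↦ (a + b/2, b·√3/2)`), and `o = true` is the
down-pointing unit triangle with vertices `(a+1,b), (a,b+1), (a+1,b+1)`. -/
abbrev Tri : Type := ℤ × ℤ × Bool

/-- Adjacency from an up-pointing triangle `s` to a down-pointing triangle `t`
(sharing a unit edge). -/
def adjUD (s t : Tri) : Prop :=
  s.2.2 = false ∧ t.2.2 = true ∧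
    ((t.1 = s.1 ∧ t.2.1 = s.2.1) ∨ (t.1 = s.1 - 1 ∧ t.2.1 = s.2.1) ∨
      (t.1 = s.1 ∧ t.2.1 = s.2.1 - 1))

/-- Two unit triangles share a unit edge (form a lozenge). -/
def adj (s t : Tri) : Prop := adjUD s t ∨ adjUD t s

/-- A lozenge tiling of the region `R` with barrier edges `Bar`, encoded as the
involution pairing each unit triangle of `R` with the one it is matched to. -/
def IsTiling (R : Set Tri) (Bar : Set (Tri × Tri)) (f : Tri → Tri) : Prop :=
  (∀ t, t ∉ R → f t = t) ∧
    ∀ t ∈ R, f t ∈ R ∧ adj t (f t) ∧ f (f t) = t ∧ (t, f t) ∉ Bar ∧ (f t, t) ∉ Bar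

/-- `M R Bar` : the number of lozenge tilings of the region `R` with barriers `Bar`. -/
noncomputable def M (R : Set Tri) (Bar : Set (Tri × Tri)) : ℕ :=
  Nat.card {f : Tri → Tri // IsTiling R Bar f}

/-- 180° rotation about the point `(c.1/2, c.2/2)` (lattice coordinates). -/
def rot (c : ℤ × ℤ) (t : Tri) : Tri := (c.1 - t.1 - 1, c.2 - t.2.1 - 1, !t.2.2)

/-- `Mc c R Bar` : the number of lozenge tilings of `R` invariant under the 180°
rotation about the point `(c.1/2, c.2/2)`. -/
noncomputable def Mc (c : ℤ × ℤ) (R : Set Tri) (Bar : Set (Tri × Tri)) : ℕ :=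
  Nat.card {f : Tri → Tri // IsTiling R Bar f ∧ ∀ t, f (rot c t) = rot c (f t)}

/-- The doubly-dented hexagon whose horizontal axis (at height `0`) runs from the
west vertex `(0,0)` to the east vertex `(L,0)`, whose upper half is a trapezoid of
height `hu` and whose lower half is a trapezoid of height `hd`; the up-pointing unit
triangle just above the axis at position `i` is removed for `i ∈ U`, and the
down-pointing one just below the axis at position `i` is removed for `i ∈ D`
(positions are labelled `1,…,L` from left to right). -/
def HRegion (L hu hd : ℤ) (U D : Set ℤ) : Set Tri :=
  {t | (t.2.2 = false ∧ 0 ≤ t.2.1 ∧ t.2.1 < hu ∧ 0 ≤ t.1 ∧ t.1 + t.2.1 ≤ L - 1 ∧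
          (t.2.1 = 0 → t.1 + 1 ∉ U)) ∨
       (t.2.2 = true ∧ 0 ≤ t.2.1 ∧ t.2.1 < hu ∧ 0 ≤ t.1 ∧ t.1 + t.2.1 ≤ L - 2) ∨
       (t.2.2 = false ∧ -hd ≤ t.2.1 ∧ t.2.1 ≤ -1 ∧ -t.2.1 ≤ t.1 ∧ t.1 ≤ L - 1) ∨
       (t.2.2 = true ∧ -hd ≤ t.2.1 ∧ t.2.1 ≤ -1 ∧ -t.2.1 - 1 ≤ t.1 ∧ t.1 ≤ L - 1 ∧
          (t.2.1 = -1 → t.1 + 1 ∉ D))}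

/-- The barrier edges along the axis at the positions of `B`: the barrier at
position `i` forbids the vertical lozenge formed by the up-triangle just above and
the down-triangle just below the `i`-th unit segment of the axis. -/
def HBar (B : Set ℤ) : Set (Tri × Tri) :=
  {e | ∃ i ∈ B, e = ((i - 1, 0, false), (i - 1, -1, true)) ∨
                 e = ((i - 1, -1, true), (i - 1, 0, false))}

/-- `MH x y U D B` : the number of lozenge tilings of the doubly-dented hexagon
`H_{x,y}(U; D; B)`. -/
noncomputable def MH (x y : ℕ) (U D B : Finset ℤ) : ℕ :=
  M (HRegion (x + y + (U ∪ D).card) (y + U.card) (y + D.card) ↑U ↑D) (HBar ↑B)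

/-- `mir N W = {N + 1 - w : w ∈ W}`, the reflection of an index set. -/
def mir (N : ℤ) (W : Finset ℤ) : Finset ℤ := W.image (fun w => N + 1 - w)

/-- `MCS x y U D B` : the number of lozenge tilings of the centrally symmetric
doubly-dented hexagon `CS_{x,y}(U; D; B) = H_{x,y}(U ∪ D̄; D ∪ Ū; B ∪ B̄)`,
where `N = x + y + 2|U ∪ D|` and `W̄ = {N+1-w : w ∈ W}`. -/
noncomputable def MCS (x y : ℕ) (U D B : Finset ℤ) : ℕ :=
  MH x y (U ∪ mir (x + y + 2 * (U ∪ D).card) D) (D ∪ mir (x + y + 2 * (U ∪ D).card) U)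
    (B ∪ mir (x + y + 2 * (U ∪ D).card) B)

/-- `McCS x y U D B` : the number of centrally symmetric lozenge tilings of
`CS_{x,y}(U; D; B)` (tilings invariant under the 180° rotation about the center
`(N/2, 0)` of the region, `N = x + y + 2|U ∪ D|`). -/
noncomputable def McCS (x y : ℕ) (U D B : Finset ℤ) : ℕ :=
  let N : ℤ := x + y + 2 * (U ∪ D).card
  let U' : Finset ℤ := U ∪ mir N D
  let D' : Finset ℤ := D ∪ mir N U
  Mc (N, 0)
    (HRegion (x + y + (U' ∪ D').card) (y + U'.card) (y + D'.card) ↑U' ↑D')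
    (HBar ↑(B ∪ mir N B))

/-- `Δprod S = ∏_{s < s' ∈ S} (s' - s)`. -/
def Δprod (S : Finset ℤ) : ℤ :=
  ∏ p ∈ (S ×ˢ S).filter (fun p => p.1 < p.2), (p.2 - p.1)

/-- MacMahon's box formula `PP(a,b,c)`. -/
def PP (a b c : ℕ) : ℚ :=
  ∏ i ∈ Icc 1 a, ∏ j ∈ Icc 1 b, ∏ k ∈ Icc 1 c,
    (((i : ℚ) + j + k - 1) / ((i : ℚ) + j + k - 2))

/-- The hyperfactorial `H(n) = 0!·1!⋯(n-1)!`. -/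
def hyperfac (n : ℕ) : ℕ := ∏ k ∈ range n, k.factorial

/-- The Pochhammer symbol `(q)_r = q(q+1)⋯(q+r-1)`. -/
def poch (q : ℚ) (r : ℕ) : ℚ := ∏ i ∈ range r, (q + i)

/-- The dented semihexagon `T_{a,b}(S)`: the trapezoid with north side `b`, slanted
sides `a` and base `a + b` lying above the horizontal axis (base from `(0,0)` to
`(a+b,0)`), with the up-pointing unit triangles at the positions of `S` removed
from its base. -/
def TRegion (a b : ℤ) (S : Set ℤ) : Set Tri :=
  {t | (t.2.2 = false ∧ 0 ≤ t.2.1 ∧ t.2.1 < a ∧ 0 ≤ t.1 ∧ t.1 + t.2.1 ≤ a + b - 1 ∧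
          (t.2.1 = 0 → t.1 + 1 ∉ S)) ∨
       (t.2.2 = true ∧ 0 ≤ t.2.1 ∧ t.2.1 < a ∧ 0 ≤ t.1 ∧ t.1 + t.2.1 ≤ a + b - 2)}

/-- `MT a b S` : the number of lozenge tilings of `T_{a,b}(S)`. -/
noncomputable def MT (a b : ℤ) (S : Finset ℤ) : ℕ := M (TRegion a b ↑S) ∅

/-- The trapezoid with base `L` (from `(0,0)` to `(L,0)`), height `h`. -/
def trapRegion (L h : ℤ) : Set Tri :=
  {t | (t.2.2 = false ∧ 0 ≤ t.2.1 ∧ t.2.1 < h ∧ 0 ≤ t.1 ∧ t.1 + t.2.1 ≤ L - 1) ∨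
       (t.2.2 = true ∧ 0 ≤ t.2.1 ∧ t.2.1 < h ∧ 0 ≤ t.1 ∧ t.1 + t.2.1 ≤ L - 2)}

/-- The unit triangles of the up-pointing triangle of side `s` whose base runs from
`(p,0)` to `(p+s,0)` (lying above the axis). -/
def upTriSet (p : ℤ) (s : ℕ) : Set Tri :=
  {t | t.2.2 = false ∧ 0 ≤ t.2.1 ∧ p ≤ t.1 ∧ t.1 + t.2.1 ≤ p + s - 1} ∪
  {t | t.2.2 = true ∧ 0 ≤ t.2.1 ∧ p ≤ t.1 ∧ t.1 + t.2.1 ≤ p + s - 2}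

/-- The unit triangles of the down-pointing triangle of side `s` whose top edge runs
from `(p,0)` to `(p+s,0)` (lying below the axis). -/
def downTriSet (p : ℤ) (s : ℕ) : Set Tri :=
  {t | t.2.2 = true ∧ -(s : ℤ) ≤ t.2.1 ∧ t.2.1 ≤ -1 ∧ p - t.2.1 - 1 ≤ t.1 ∧ t.1 ≤ p + s - 1} ∪
  {t | t.2.2 = false ∧ -(s : ℤ) ≤ t.2.1 ∧ t.2.1 ≤ -1 ∧ p - t.2.1 ≤ t.1 ∧ t.1 ≤ p + s - 1}

/-- A triangle of side `s` along the axis starting at `p`, up- or down-pointing. -/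
def triSet (p : ℤ) (s : ℕ) (up : Bool) : Set Tri :=
  if up then upTriSet p s else downTriSet p s

/-- The removed triangles, at the dents given by a run/gap sequence
`a₁ (run), a₂ (gap), a₃ (run), …` starting at `p`. -/
def seqRemoved : ℤ → List ℕ → Set Tri
  | _, [] => ∅
  | p, [s] => upTriSet p s
  | p, s :: g :: r => upTriSet p s ∪ seqRemoved (p + s + g) r

/-- `oSum [a₁,a₂,…] = a₁ + a₃ + a₅ + ⋯`. -/
def oSum : List ℕ → ℕ
  | [] => 0
  | [s] => s
  | s :: _ :: r => s + oSum r

/-- `sFun l = s(a₁,…,a_r)` : the number of lozenge tilings of the generalized dented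
semihexagon `S(a₁,…,a_r)` (trapezoid of base `a₁+⋯+a_r` and height `a₁+a₃+⋯`, with
up-pointing triangles of sides `a₁, a₃, …` removed from its base at mutual
distances `a₂, a₄, …`, the first one touching the west vertex). -/
noncomputable def sFun (l : List ℕ) : ℕ :=
  M (trapRegion l.sum (oSum l) \ seqRemoved 0 l) ∅

/-- A fern: a chain of lattice triangles of alternating orientations along the axis,
given by the list of side-lengths and the orientation of the first triangle. -/
structure Fern where
  lengths : List ℕ
  firstUp : Bool

/-- The total length of a fern. -/
def Fern.total (F : Fern) : ℕ := F.lengths.sum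

/-- Sum of the entries at even positions if the flag is `true` (resp. odd positions
if `false`). -/
def upLenAux : Bool → List ℕ → ℕ
  | _, [] => 0
  | true, s :: r => s + upLenAux false r
  | false, _ :: r => upLenAux true r

/-- The sum of side-lengths of the up-pointing triangles of a fern. -/
def Fern.up (F : Fern) : ℕ := upLenAux F.firstUp F.lengths

/-- The sum of side-lengths of the down-pointing triangles of a fern. -/
def Fern.down (F : Fern) : ℕ := upLenAux (!F.firstUp) F.lengths

/-- The image of a fern under 180° rotation. -/
def Fern.rot (F : Fern) : Fern :=
  ⟨F.lengths.reverse, if F.lengths.length % 2 = 1 then !F.firstUp else F.firstUp⟩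

/-- Concatenation of two ferns (the second continuing the alternation of the first). -/
def Fern.cat (F G : Fern) : Fern := ⟨F.lengths ++ G.lengths, F.firstUp⟩

/-- The unit triangles of a chain of triangles of alternating orientations starting
at `p` with the first orientation `o`. -/
def chainSet : ℤ → Bool → List ℕ → Set Tri
  | _, _, [] => ∅
  | p, o, s :: r => triSet p s o ∪ chainSet (p + s) (!o) r

/-- The unit triangles of the ferns `Fs` placed along the axis starting at `p` with
gaps `ds` between consecutive ferns. -/
def fernsSet : ℤ → List Fern → List ℕ → Set Tri
  | _, [], _ => ∅
  | p, F :: Fs, ds => chainSet p F.firstUp F.lengths ∪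
      fernsSet (p + F.total + ds.headI) Fs ds.tail

def totUp (Fs : List Fern) : ℕ := (Fs.map Fern.up).sum
def totDown (Fs : List Fern) : ℕ := (Fs.map Fern.down).sum

/-- The hexagon with ferns removed `R_{x,y}(F₁,…,F_k | d₁,…,d_{k-1})`. -/
def RRegion (x y : ℕ) (Fs : List Fern) (ds : List ℕ) : Set Tri :=
  HRegion (x + y + totUp Fs + totDown Fs) (y + totUp Fs) (y + totDown Fs) ∅ ∅ \
    fernsSet 0 Fs ds

/-- The number of lozenge tilings of `R_{x,y}(F₁,…,F_k | d₁,…,d_{k-1})`. -/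
noncomputable def MR (x y : ℕ) (Fs : List Fern) (ds : List ℕ) : ℕ :=
  M (RRegion x y Fs ds) ∅

/-- The number of centrally symmetric lozenge tilings of
`R_{x,y}(F₁,…,F_k | d₁,…,d_{k-1})` (for a centrally symmetric datum; the center of
the hexagon is the midpoint `(L/2, 0)` of its axis). -/
noncomputable def McR (x y : ℕ) (Fs : List Fern) (ds : List ℕ) : ℕ :=
  Mc ((x + y + totUp Fs + totDown Fs : ℤ), 0) (RRegion x y Fs ds) ∅

/-- The positions (labelled `1,2,…` from the left) of the removed up-pointing unit
triangles just above the axis, for a chain starting at `p` with first orientation `o`. -/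
noncomputable def upRunPos : ℤ → Bool → List ℕ → Finset ℤ
  | _, _, [] => ∅
  | p, true, s :: r => Finset.Icc (p + 1) (p + s) ∪ upRunPos (p + s) false r
  | p, false, s :: r => upRunPos (p + s) true r

/-- The positions of the removed up-pointing unit triangles along the axis for the
ferns `Fs` with gaps `ds`, starting at `p`. -/
noncomputable def upPosAll : ℤ → List Fern → List ℕ → Finset ℤ
  | _, [], _ => ∅
  | p, F :: Fs, ds => upRunPos p F.firstUp F.lengths ∪
      upPosAll (p + F.total + ds.headI) Fs ds.tail

/-- The positions of the removed down-pointing unit triangles along the axis. -/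
noncomputable def downPosAll (p : ℤ) (Fs : List Fern) (ds : List ℕ) : Finset ℤ :=
  upPosAll p (Fs.map (fun F => Fern.mk F.lengths (!F.firstUp))) ds

/-- The unit triangles removed in the generalized dented semihexagon determined by
the maximal runs of the position set `A`: a unit triangle is removed precisely when
the interval of base positions it lies over is contained in `A`. -/
def runRemoved (A : Finset ℤ) : Set Tri :=
  {t | ∀ i ∈ Finset.Icc (t.1 + 1) (t.1 + t.2.1 + (if t.2.2 then 2 else 1)), i ∈ A}

/-- `MS A` : the number of lozenge tilings of the generalized dented semihexagon
`S(e₁, e₂, …)` where `e₁, e₃, …` are the lengths of the maximal runs of `A` and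
`e₂, e₄, …` the gaps between consecutive runs (base `= max A`, height `= |A|`). -/
noncomputable def MS (A : Finset ℤ) : ℕ :=
  M (trapRegion (WithBot.unbotD 0 A.max) A.card \ runRemoved A) ∅

/-- The fern list of `E_{x,y}(F₁,…,F_k | d₁,…,d_{k-1})`:
`F₁,…,F_{k-1}, F_k ∘ F̄_k, F̄_{k-1},…,F̄₁`. -/
def EFerns (Fs : List Fern) : List Fern :=
  Fs.dropLast ++ Fern.cat (Fs.getLastD ⟨[], true⟩) (Fern.rot (Fs.getLastD ⟨[], true⟩)) ::
    (Fs.dropLast.map Fern.rot).reverse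

/-- The gap list of `E_{x,y}` : `d₁,…,d_{k-1},d_{k-1},…,d₁`. -/
def Egaps (ds : List ℕ) : List ℕ := ds ++ ds.reverse

/-- The fern list of `E'_{x,y}(F₁,…,F_k | d₁,…,d_{k-1})` : `F₁,…,F_k,F̄_k,…,F̄₁`. -/
def E'Ferns (Fs : List Fern) : List Fern := Fs ++ (Fs.map Fern.rot).reverse

/-- The gap list of `E'_{x,y}` : `d₁,…,d_{k-1},1,d_{k-1},…,d₁`. -/
def E'gaps (ds : List ℕ) : List ℕ := ds ++ 1 :: ds.reverse

end Shuf

namespace Shuf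

lemma tri_eq {a b : ℤ} {o : Bool} {t : Tri} (h1 : t.1 = a) (h2 : t.2.1 = b)
    (h3 : t.2.2 = o) : t = (a, b, o) := by
  rw [Prod.ext_iff, Prod.ext_iff]
  exact ⟨h1, h2, h3⟩

lemma mem_mir {N i : ℤ} {W : Finset ℤ} : i ∈ mir N W ↔ N + 1 - i ∈ W := by
  simp only [mir, Finset.mem_image]
  constructor
  · rintro ⟨w, hw, rfl⟩; simpa using hw
  · intro h; exact ⟨N + 1 - i, h, by ring⟩

lemma mir_mir (N : ℤ) (W : Finset ℤ) : mir N (mir N W) = W := by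
  ext i; simp only [mem_mir]; constructor <;> intro h <;> simpa using h

lemma rot_invol (N : ℤ) (t : Tri) : rot (N, 0) (rot (N, 0) t) = t := by
  obtain ⟨a, b, o⟩ := t
  simp only [rot, Bool.not_not, Prod.mk.injEq]
  exact ⟨by ring, by ring, trivial⟩

lemma adjUD_rot {N : ℤ} {s t : Tri} (h : adjUD s t) :
    adjUD (rot (N,0) t) (rot (N,0) s) := by
  obtain ⟨hs, ht, hc⟩ := h
  refine ⟨by simp [rot, ht], by simp [rot, hs], ?_⟩
  simp only [rot]
  rcases hc with ⟨h1, h2⟩ | ⟨h1, h2⟩ | ⟨h1, h2⟩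
  · exact Or.inl ⟨by omega, by omega⟩
  · exact Or.inr (Or.inl ⟨by omega, by omega⟩)
  · exact Or.inr (Or.inr ⟨by omega, by omega⟩)

lemma adj_rot {N : ℤ} {s t : Tri} (h : adj s t) : adj (rot (N,0) s) (rot (N,0) t) := by
  rcases h with h | h
  · exact Or.inr (adjUD_rot h)
  · exact Or.inl (adjUD_rot h)

/-- shape of the partner of a down triangle -/
lemma adj_down_shape {t s : Tri} (ht : t.2.2 = true) (h : adj t s) :
    s.2.2 = false ∧ (s.2.1 = t.2.1 ∨ s.2.1 = t.2.1 + 1) := by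
  rcases h with ⟨h1, _, _⟩ | ⟨h1, h2, hc⟩
  · rw [ht] at h1; cases h1
  · refine ⟨h1, ?_⟩
    rcases hc with ⟨_, hb⟩ | ⟨_, hb⟩ | ⟨_, hb⟩ <;> omega

/-- shape of the partner of an up triangle -/
lemma adj_up_shape {t s : Tri} (ht : t.2.2 = false) (h : adj t s) :
    s.2.2 = true ∧ (s.2.1 = t.2.1 ∨ (s.2.1 = t.2.1 - 1 ∧ s.1 = t.1)) := by
  rcases h with ⟨h1, h2, hc⟩ | ⟨_, h2, hc⟩
  · refine ⟨h2, ?_⟩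
    rcases hc with ⟨ha, hb⟩ | ⟨ha, hb⟩ | ⟨ha, hb⟩
    · exact Or.inl hb
    · exact Or.inl hb
    · exact Or.inr ⟨hb, ha⟩
  · rw [ht] at h2; cases h2

lemma rot_mem_HRegion {N hu : ℤ} {U' D' : Finset ℤ} (hUD : mir N U' = D') {t : Tri}
    (ht : t ∈ HRegion N hu hu ↑U' ↑D') : rot (N,0) t ∈ HRegion N hu hu ↑U' ↑D' := by
  have hD : ∀ i : ℤ, i ∈ D' ↔ N + 1 - i ∈ U' := by
    intro i; rw [← hUD, mem_mir]
  have hU : ∀ i : ℤ, i ∈ U' ↔ N + 1 - i ∈ D' := by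
    intro i
    rw [hD]
    constructor <;> intro h <;> simpa using h
  obtain ⟨a, b, o⟩ := t
  simp only [HRegion, Set.mem_setOf_eq, rot, Finset.mem_coe] at ht ⊢
  rcases ht with ⟨h1,h2,h3,h4,h5,h6⟩ | ⟨h1,h2,h3,h4,h5⟩ | ⟨h1,h2,h3,h4,h5⟩ | ⟨h1,h2,h3,h4,h5,h6⟩
  · refine Or.inr (Or.inr (Or.inr ⟨by simp [h1], by omega, by omega, by omega, by omega, ?_⟩))
    intro hb hmem
    have : a + 1 ∈ U' := by
      rw [hU]
      have : N + 1 - (a + 1) = N - a - 1 + 1 := by ring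
      rw [this]; exact hmem
    exact h6 (by omega) this
  · exact Or.inr (Or.inr (Or.inl ⟨by simp [h1], by omega, by omega, by omega, by omega⟩))
  · exact Or.inr (Or.inl ⟨by simp [h1], by omega, by omega, by omega, by omega⟩)
  · refine Or.inl ⟨by simp [h1], by omega, by omega, by omega, by omega, ?_⟩
    intro hb hmem
    have : a + 1 ∈ D' := by
      rw [hD]
      have : N + 1 - (a + 1) = N - a - 1 + 1 := by ring
      rw [this]; exact hmem
    exact h6 (by omega) this

def upc (c : ℤ) : Tri := (c - 1, 0, false)
def dnc (c : ℤ) : Tri := (c - 1, -1, true)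

lemma rot_upc (N c : ℤ) (hN : N = 2 * c - 1) : rot (N,0) (upc c) = dnc c := by
  simp only [rot, upc, dnc, Prod.mk.injEq]
  refine ⟨by omega, by omega, by simp⟩

lemma rot_dnc (N c : ℤ) (hN : N = 2 * c - 1) : rot (N,0) (dnc c) = upc c := by
  simp only [rot, upc, dnc, Prod.mk.injEq]
  refine ⟨by omega, by omega, by simp⟩

lemma mem_upper_up {N hu : ℤ} {U' D' : Finset ℤ} {a b : ℤ} (hb : 0 ≤ b) :
    ((a, b, false) : Tri) ∈ HRegion N hu hu ↑U' ↑D' ↔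
      (b < hu ∧ 0 ≤ a ∧ a + b ≤ N - 1 ∧ (b = 0 → a + 1 ∉ U')) := by
  simp only [HRegion, Set.mem_setOf_eq, Finset.mem_coe, true_and, and_true,
    false_and, and_false, false_or, or_false, Bool.false_eq_true, Bool.true_eq_false]
  constructor
  · rintro (⟨h0, h1, h2, h3, h4⟩ | ⟨h0, h1, h2, h3⟩)
    · exact ⟨h1, h2, h3, h4⟩
    · omega
  · rintro ⟨h1, h2, h3, h4⟩
    exact Or.inl ⟨hb, h1, h2, h3, h4⟩

lemma mem_upper_dn {N hu : ℤ} {U' D' : Finset ℤ} {a b : ℤ} (hb : 0 ≤ b) :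
    ((a, b, true) : Tri) ∈ HRegion N hu hu ↑U' ↑D' ↔
      (b < hu ∧ 0 ≤ a ∧ a + b ≤ N - 2) := by
  simp only [HRegion, Set.mem_setOf_eq, Finset.mem_coe, true_and, and_true,
    false_and, and_false, false_or, or_false, Bool.false_eq_true, Bool.true_eq_false]
  constructor
  · rintro (⟨h0, h1, h2, h3⟩ | ⟨h0, h1, h2, h3, h4⟩)
    · exact ⟨h1, h2, h3⟩
    · omega
  · rintro ⟨h1, h2, h3⟩
    exact Or.inl ⟨hb, h1, h2, h3⟩

lemma mem_TRegion_iff {N c hu : ℤ} (U' D' : Finset ℤ) (t : Tri) :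
    t ∈ TRegion hu (N - hu) ↑(U' ∪ {c}) ↔
      (t ∈ HRegion N hu hu ↑U' ↑D' ∧ 0 ≤ t.2.1 ∧ t ≠ upc c) := by
  obtain ⟨a, b, o⟩ := t
  cases o
  all_goals dsimp only
  · constructor
    · intro h
      simp only [TRegion, Set.mem_setOf_eq, Finset.coe_union, Set.mem_union,
        Finset.mem_coe, Finset.coe_singleton, Set.mem_singleton_iff, true_and,
        and_true, false_and, and_false, false_or, or_false, Bool.false_eq_true, Bool.true_eq_false] at h
      obtain ⟨h0, h1, h2, h3, h4⟩ := h
      have h4' : b = 0 → a + 1 ∉ U' := fun hb hm => h4 hb (Or.inl hm)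
      have h4'' : b = 0 → a + 1 ≠ c := fun hb hm => h4 hb (Or.inr hm)
      refine ⟨(mem_upper_up h0).2 ⟨h1, h2, by omega, h4'⟩, h0, ?_⟩
      intro hh
      rw [upc, Prod.ext_iff, Prod.ext_iff] at hh
      exact h4'' (by simpa using hh.2.1) (by omega)
    · rintro ⟨hmem, h0, hne⟩
      have hm := (mem_upper_up (U' := U') (D' := D') h0).1 hmem
      simp only [TRegion, Set.mem_setOf_eq, Finset.coe_union, Set.mem_union,
        Finset.mem_coe, Finset.coe_singleton, Set.mem_singleton_iff, true_and,
        and_true, false_and, and_false, false_or, or_false, Bool.false_eq_true, Bool.true_eq_false]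
      refine ⟨h0, hm.1, hm.2.1, by omega, ?_⟩
      rintro hb (hmm | hmm)
      · exact hm.2.2.2 hb hmm
      · exfalso
        apply hne
        have ha : a = c - 1 := by omega
        have hb0 : b = 0 := hb
        rw [upc, ha, hb0]
  · constructor
    · intro h
      simp only [TRegion, Set.mem_setOf_eq, true_and, and_true, false_and,
        and_false, false_or, or_false, Bool.false_eq_true, Bool.true_eq_false] at h
      obtain ⟨h0, h1, h2, h3⟩ := h
      refine ⟨(mem_upper_dn h0).2 ⟨h1, h2, by omega⟩, h0, ?_⟩
      intro hh
      rw [upc, Prod.ext_iff, Prod.ext_iff] at hh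
      simpa using hh.2.2
    · rintro ⟨hmem, h0, -⟩
      have hm := (mem_upper_dn (U' := U') (D' := D') h0).1 hmem
      simp only [TRegion, Set.mem_setOf_eq, true_and, and_true, false_and,
        and_false, false_or, or_false, Bool.false_eq_true, Bool.true_eq_false]
      exact ⟨h0, hm.1, hm.2.1, by omega⟩

lemma mem_HBar_iff {B' : Finset ℤ} {p q : Tri} :
    (p, q) ∈ HBar ↑B' ↔ ∃ i ∈ B',
      (p = (i - 1, 0, false) ∧ q = (i - 1, -1, true)) ∨
      (p = (i - 1, -1, true) ∧ q = (i - 1, 0, false)) := by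
  simp only [HBar, Set.mem_setOf_eq, Finset.mem_coe, Prod.ext_iff]

lemma HBar_rows {B' : Finset ℤ} {p q : Tri} (h : (p, q) ∈ HBar ↑B') :
    (p.2.1 = 0 ∧ q.2.1 = -1) ∨ (p.2.1 = -1 ∧ q.2.1 = 0) := by
  rw [mem_HBar_iff] at h
  obtain ⟨i, _, ⟨rfl, rfl⟩ | ⟨rfl, rfl⟩⟩ := h
  · exact Or.inl ⟨rfl, rfl⟩
  · exact Or.inr ⟨rfl, rfl⟩

lemma card_Aup_eq (N hu : ℤ) (U' : Finset ℤ) (hhu : 1 ≤ hu) (huN : hu ≤ N)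
    (hcard : (U'.card : ℤ) = hu - 1) (hUrange : ∀ i ∈ U', 1 ≤ i ∧ i ≤ N) :
    (((Finset.Icc (0:ℤ) (N-1) ×ˢ Finset.Icc (0:ℤ) (hu-1)).filter
        (fun p => p.1 + p.2 ≤ N - 1)) \ U'.image (fun i => (i - 1, (0:ℤ)))).card
      = ((Finset.Icc (0:ℤ) (N-1) ×ˢ Finset.Icc (0:ℤ) (hu-1)).filter
        (fun p => p.1 + p.2 ≤ N - 2)).card + 1 := by
  classical
  set P := Finset.Icc (0:ℤ) (N-1) ×ˢ Finset.Icc (0:ℤ) (hu-1) with hP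
  set A := P.filter (fun p => p.1 + p.2 ≤ N - 1) with hA
  set Dp := P.filter (fun p => p.1 + p.2 ≤ N - 2) with hDp
  set E := (Finset.Icc (0:ℤ) (hu-1)).image (fun b => ((N-1-b, b) : ℤ × ℤ)) with hE
  set dents := U'.image (fun i => (i - 1, (0:ℤ))) with hdents
  have hAE : A = Dp ∪ E := by
    ext ⟨pa, pb⟩
    simp only [hA, hDp, hE, hP, mem_filter, mem_product, mem_Icc, mem_union,
      mem_image, Prod.mk.injEq]
    constructor
    · rintro ⟨⟨⟨h1, h2⟩, h3, h4⟩, h5⟩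
      by_cases hc : pa + pb ≤ N - 2
      · exact Or.inl ⟨⟨⟨h1, h2⟩, h3, h4⟩, hc⟩
      · exact Or.inr ⟨pb, ⟨h3, h4⟩, by omega, rfl⟩
    · rintro (⟨⟨⟨h1, h2⟩, h3, h4⟩, h5⟩ | ⟨b0, ⟨hb1, hb2⟩, hb3, hb4⟩)
      · exact ⟨⟨⟨h1, h2⟩, h3, h4⟩, by omega⟩
      · exact ⟨⟨⟨by omega, by omega⟩, by omega, by omega⟩, by omega⟩
  have hdisj : Disjoint Dp E := by
    rw [Finset.disjoint_left]
    rintro ⟨pa, pb⟩ hD hE'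
    simp only [hDp, hE, hP, mem_filter, mem_product, mem_Icc, mem_image,
      Prod.mk.injEq] at hD hE'
    obtain ⟨b0, _, hb3, hb4⟩ := hE'
    omega
  have hcardE : E.card = hu.toNat := by
    rw [hE, Finset.card_image_of_injective _ (fun i j h => by
      simpa using congrArg Prod.snd h), Int.card_Icc]
    omega
  have hsub : dents ⊆ A := by
    intro p hp
    simp only [hdents, mem_image] at hp
    obtain ⟨i, hi, rfl⟩ := hp
    have := hUrange i hi
    simp only [hA, hP, mem_filter, mem_product, mem_Icc]
    refine ⟨⟨⟨by omega, by omega⟩, by omega, by omega⟩, by omega⟩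
  have hcardD : dents.card = U'.card := by
    rw [hdents]
    exact Finset.card_image_of_injective _ (fun i j h => by simpa using congrArg Prod.fst h)
  rw [card_sdiff_of_subset hsub, hAE, Finset.card_union_of_disjoint hdisj, hcardE, hcardD]
  omega

lemma cross_unique {N c hu : ℤ} {U' D' B' : Finset ℤ} {f : Tri → Tri}
    (hN : N = 2 * c - 1) (hhu : 1 ≤ hu) (huN : hu ≤ N)
    (hcard : (U'.card : ℤ) = hu - 1)
    (hUrange : ∀ i ∈ U', 1 ≤ i ∧ i ≤ N)
    (hUD : mir N U' = D')
    (hf : IsTiling (HRegion N hu hu ↑U' ↑D') (HBar ↑B') f)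
    (hsym : ∀ t, f (rot (N,0) t) = rot (N,0) (f t)) :
    f (upc c) = dnc c ∧ ∀ t ∈ HRegion N hu hu (↑U' : Set ℤ) ↑D',
      t.2.2 = false → 0 ≤ t.2.1 → ¬ 0 ≤ (f t).2.1 → t = upc c := by
  classical
  obtain ⟨hout, hin⟩ := hf
  set R := HRegion N hu hu (↑U' : Set ℤ) ↑D' with hR
  set P := Finset.Icc (0:ℤ) (N-1) ×ˢ Finset.Icc (0:ℤ) (hu-1) with hP
  set Aup := (P.filter (fun p => p.1 + p.2 ≤ N - 1)) \ U'.image (fun i => (i - 1, (0:ℤ)))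
    with hAup
  set Dp := P.filter (fun p => p.1 + p.2 ≤ N - 2) with hDp
  set UppF := Aup.image (fun p => ((p.1, p.2, false) : Tri)) with hUppF
  set DwnF := Dp.image (fun p => ((p.1, p.2, true) : Tri)) with hDwnF
  have hmemU : ∀ t : Tri, t ∈ UppF ↔ (t ∈ R ∧ t.2.2 = false ∧ 0 ≤ t.2.1) := by
    rintro ⟨a, b, o⟩
    simp only [hUppF, hAup, hP, mem_image, mem_sdiff, mem_filter, mem_product,
      mem_Icc, Prod.mk.injEq]
    constructor
    · rintro ⟨⟨pa, pb⟩, ⟨⟨⟨⟨h1, h2⟩, h3, h4⟩, h5⟩, h6⟩, ha, hb, ho⟩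
      subst ha; subst hb
      have ho' : o = false := ho.symm
      subst ho'
      refine ⟨(mem_upper_up h3).2 ⟨by omega, by omega, by omega, ?_⟩, rfl, h3⟩
      intro hb0 hmem
      apply h6
      refine ⟨pa + 1, hmem, ?_⟩
      have hb0' : pb = 0 := hb0
      rw [show pa + 1 - 1 = pa by omega, hb0']
    · rintro ⟨hmem, ho, hb⟩
      subst ho
      have hm := (mem_upper_up hb).1 hmem
      refine ⟨(a, b), ⟨⟨⟨⟨hm.2.1, show a ≤ N - 1 by omega⟩, hb,
        show b ≤ hu - 1 by omega⟩, show a + b ≤ N - 1 by omega⟩, ?_⟩, rfl, rfl, rfl⟩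
      rintro ⟨i, hi, hie⟩
      have h1 : i - 1 = a := congrArg Prod.fst hie
      have h2 : (0:ℤ) = b := congrArg Prod.snd hie
      exact hm.2.2.2 (by omega) (by rw [show a + 1 = i by omega]; exact hi)
  have hmemD : ∀ t : Tri, t ∈ DwnF ↔ (t ∈ R ∧ t.2.2 = true ∧ 0 ≤ t.2.1) := by
    rintro ⟨a, b, o⟩
    simp only [hDwnF, hDp, hP, mem_image, mem_filter, mem_product, mem_Icc,
      Prod.mk.injEq]
    constructor
    · rintro ⟨⟨pa, pb⟩, ⟨⟨⟨h1, h2⟩, h3, h4⟩, h5⟩, ha, hb, ho⟩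
      subst ha; subst hb
      have ho' : o = true := ho.symm
      subst ho'
      exact ⟨(mem_upper_dn h3).2 ⟨by omega, by omega, by omega⟩, rfl, h3⟩
    · rintro ⟨hmem, ho, hb⟩
      subst ho
      have hm := (mem_upper_dn hb).1 hmem
      exact ⟨(a, b), ⟨⟨⟨hm.2.1, show a ≤ N - 1 by omega⟩, hb,
        show b ≤ hu - 1 by omega⟩, show a + b ≤ N - 2 by omega⟩, rfl, rfl, rfl⟩
  have hcards : UppF.card = DwnF.card + 1 := by
    rw [hUppF, hDwnF,
      Finset.card_image_of_injective _ (fun p q h => by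
        have h1 := congrArg Prod.fst h
        have h2 := congrArg (fun t : Tri => t.2.1) h
        simp at h1 h2
        exact Prod.ext h1 h2),
      Finset.card_image_of_injective _ (fun p q h => by
        have h1 := congrArg Prod.fst h
        have h2 := congrArg (fun t : Tri => t.2.1) h
        simp at h1 h2
        exact Prod.ext h1 h2)]
    exact card_Aup_eq N hu U' hhu huN hcard hUrange
  have hbij : DwnF.card = (UppF.filter (fun s => 0 ≤ (f s).2.1)).card := by
    apply Finset.card_bij (fun t _ => f t)
    · intro t ht
      rw [hmemD] at ht
      obtain ⟨htR, hto, htb⟩ := ht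
      obtain ⟨hfR, hadj, hff, -, -⟩ := hin t htR
      have hs := adj_down_shape hto hadj
      rw [mem_filter, hmemU]
      refine ⟨⟨hfR, hs.1, by omega⟩, ?_⟩
      rw [hff]; exact htb
    · intro a ha b hb h
      rw [hmemD] at ha hb
      have h1 := (hin a ha.1).2.2.1
      have h2 := (hin b hb.1).2.2.1
      rw [← h1, ← h2, h]
    · intro s hs
      rw [mem_filter, hmemU] at hs
      obtain ⟨⟨hsR, hso, hsb⟩, hsf⟩ := hs
      obtain ⟨hfR, hadj, hff, -, -⟩ := hin s hsR
      have hsh := adj_up_shape hso hadj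
      refine ⟨f s, ?_, hff⟩
      rw [hmemD]
      exact ⟨hfR, hsh.1, hsf⟩
  have hone : (UppF.filter (fun s => ¬ 0 ≤ (f s).2.1)).card = 1 := by
    have hsub2 : UppF.filter (fun s => 0 ≤ (f s).2.1) ⊆ UppF := Finset.filter_subset _ _
    have hEq : UppF.filter (fun s => ¬ 0 ≤ (f s).2.1)
        = UppF \ UppF.filter (fun s => 0 ≤ (f s).2.1) := by
      ext u
      simp only [mem_filter, mem_sdiff]
      tauto
    have hle : (UppF.filter (fun s => 0 ≤ (f s).2.1)).card ≤ UppF.card :=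
      Finset.card_le_card hsub2
    rw [hEq, Finset.card_sdiff_of_subset hsub2, ← hbij, hcards]
    omega
  obtain ⟨t0, ht0⟩ := Finset.card_eq_one.1 hone
  have ht0mem : t0 ∈ UppF.filter (fun s => ¬ 0 ≤ (f s).2.1) := by
    rw [ht0]; exact mem_singleton_self t0
  rw [mem_filter] at ht0mem
  obtain ⟨ht0U, ht0f⟩ := ht0mem
  rw [hmemU] at ht0U
  obtain ⟨ht0R, ht0o, ht0b⟩ := ht0U
  obtain ⟨hfR0, hadj0, hff0, -, -⟩ := hin t0 ht0R
  have hsh := adj_up_shape ht0o hadj0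
  have hrow : t0.2.1 = 0 := by
    rcases hsh.2 with h | ⟨h1, h2⟩ <;> omega
  have hft0 : f t0 = (t0.1, -1, true) := by
    rcases hsh.2 with h | ⟨h1, h2⟩
    · exfalso; omega
    · exact tri_eq h2 (by omega) hsh.1
  have hs1 : f (rot (N,0) t0) = rot (N,0) (f t0) := hsym t0
  have hsval : rot (N,0) (f t0) = ((N - t0.1 - 1, 0, false) : Tri) := by
    rw [hft0]
    exact tri_eq (by simp [rot]) (by simp [rot]) (by simp [rot])
  have hrt0R : rot (N,0) t0 ∈ R := rot_mem_HRegion hUD ht0R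
  have hsR : rot (N,0) (f t0) ∈ R := by rw [← hs1]; exact (hin _ hrt0R).1
  have hsUpp : rot (N,0) (f t0) ∈ UppF := by
    rw [hmemU, hsval]
    exact ⟨hsval ▸ hsR, rfl, by norm_num⟩
  have hfs : f (rot (N,0) (f t0)) = rot (N,0) t0 := by
    rw [← hs1, (hin _ hrt0R).2.2.1]
  have hfsrow : ¬ 0 ≤ (f (rot (N,0) (f t0))).2.1 := by
    rw [hfs]
    have : (rot (N,0) t0).2.1 = 0 - t0.2.1 - 1 := rfl
    omega
  have hsmem : rot (N,0) (f t0) ∈ UppF.filter (fun s => ¬ 0 ≤ (f s).2.1) :=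
    mem_filter.2 ⟨hsUpp, hfsrow⟩
  rw [ht0, mem_singleton] at hsmem
  have hcol : N - t0.1 - 1 = t0.1 := by
    have := congrArg Prod.fst hsmem
    rw [hsval] at this
    exact this
  have ht0eq : t0 = upc c := by
    rw [upc]
    exact tri_eq (by omega) (by omega) ht0o
  constructor
  · rw [← ht0eq, hft0, dnc]
    exact tri_eq (by omega) rfl rfl
  · intro t htR hto htb htf
    have htU : t ∈ UppF := (hmemU t).2 ⟨htR, hto, htb⟩
    have : t ∈ UppF.filter (fun s => ¬ 0 ≤ (f s).2.1) := mem_filter.2 ⟨htU, htf⟩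
    rw [ht0, mem_singleton] at this
    rw [this, ht0eq]

open Classical in
noncomputable def PhiMap (RT : Set Tri) (f : Tri → Tri) : Tri → Tri :=
  fun t => if t ∈ RT then f t else t

def PsiMap (N c : ℤ) (g : Tri → Tri) : Tri → Tri :=
  fun t => if t = upc c then dnc c else if t = dnc c then upc c
    else if 0 ≤ t.2.1 then g t else rot (N,0) (g (rot (N,0) t))

open Classical in
lemma PhiMap_pos {RT : Set Tri} {f : Tri → Tri} {t : Tri} (h : t ∈ RT) :
    PhiMap RT f t = f t := by
  unfold PhiMap
  exact if_pos h

open Classical in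
lemma PhiMap_neg {RT : Set Tri} {f : Tri → Tri} {t : Tri} (h : t ∉ RT) :
    PhiMap RT f t = t := by
  unfold PhiMap
  exact if_neg h

lemma upc_ne_dnc (c : ℤ) : upc c ≠ dnc c := by simp [upc, dnc]

lemma upc_row (c : ℤ) : (upc c).2.1 = 0 := rfl
lemma dnc_row (c : ℤ) : (dnc c).2.1 = -1 := rfl

lemma PsiMap_upc {N c : ℤ} {g : Tri → Tri} : PsiMap N c g (upc c) = dnc c := if_pos rfl

lemma PsiMap_dnc {N c : ℤ} {g : Tri → Tri} : PsiMap N c g (dnc c) = upc c := by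
  unfold PsiMap
  rw [if_neg (upc_ne_dnc c).symm, if_pos rfl]

lemma PsiMap_pos {N c : ℤ} {g : Tri → Tri} {t : Tri} (hb : 0 ≤ t.2.1) (h1 : t ≠ upc c) :
    PsiMap N c g t = g t := by
  have h2 : t ≠ dnc c := by
    intro h
    rw [h, dnc_row] at hb
    omega
  unfold PsiMap
  rw [if_neg h1, if_neg h2, if_pos hb]

lemma PsiMap_neg {N c : ℤ} {g : Tri → Tri} {t : Tri} (hb : ¬ 0 ≤ t.2.1) (h2 : t ≠ dnc c) :
    PsiMap N c g t = rot (N,0) (g (rot (N,0) t)) := by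
  have h1 : t ≠ upc c := by
    intro h
    rw [h, upc_row] at hb
    omega
  unfold PsiMap
  rw [if_neg h1, if_neg h2, if_neg hb]

lemma upc_not_bar {B' : Finset ℤ} {c : ℤ} (hcB : c ∉ B') :
    ((upc c, dnc c) : Tri × Tri) ∉ HBar ↑B' := by
  intro hmem
  obtain ⟨i, hi, ⟨he1, he2⟩ | ⟨he1, he2⟩⟩ := mem_HBar_iff.1 hmem
  · have h1 : c - 1 = i - 1 := congrArg Prod.fst he1
    have hci : c = i := by omega
    exact hcB (hci ▸ hi)
  · have h1 : false = true := congrArg (fun t : Tri => t.2.2) he1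
    simp at h1

lemma dnc_not_bar {B' : Finset ℤ} {c : ℤ} (hcB : c ∉ B') :
    ((dnc c, upc c) : Tri × Tri) ∉ HBar ↑B' := by
  intro hmem
  obtain ⟨i, hi, ⟨he1, he2⟩ | ⟨he1, he2⟩⟩ := mem_HBar_iff.1 hmem
  · have h1 : true = false := congrArg (fun t : Tri => t.2.2) he1
    simp at h1
  · have h1 : c - 1 = i - 1 := congrArg Prod.fst he1
    have hci : c = i := by omega
    exact hcB (hci ▸ hi)

lemma rot_row {N : ℤ} (t : Tri) : (rot (N,0) t).2.1 = 0 - t.2.1 - 1 := rfl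

lemma key (N c hu : ℤ) (U' D' B' : Finset ℤ)
    (hN : N = 2 * c - 1) (hhu : 1 ≤ hu) (huN : hu ≤ N)
    (hcard : (U'.card : ℤ) = hu - 1)
    (hUrange : ∀ i ∈ U', 1 ≤ i ∧ i ≤ N)
    (hUD : mir N U' = D') (hBB : mir N B' = B')
    (hcU : c ∉ U') (hcD : c ∉ D') (hcB : c ∉ B') :
    Mc (N, 0) (HRegion N hu hu ↑U' ↑D') (HBar ↑B') =
      M (TRegion hu (N - hu) ↑(U' ∪ {c})) ∅ := by
  classical
  have hc1 : 1 ≤ c := by omega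
  have hrot2 : ∀ t : Tri, rot (N,0) (rot (N,0) t) = t := rot_invol N
  have hrotR : ∀ t : Tri, t ∈ HRegion N hu hu (↑U' : Set ℤ) ↑D' →
      rot (N,0) t ∈ HRegion N hu hu (↑U' : Set ℤ) ↑D' := fun t ht => rot_mem_HRegion hUD ht
  have hrotR_iff : ∀ t : Tri, rot (N,0) t ∈ HRegion N hu hu (↑U' : Set ℤ) ↑D' ↔
      t ∈ HRegion N hu hu (↑U' : Set ℤ) ↑D' := by
    intro t
    constructor
    · intro h
      have := hrotR _ h
      rwa [hrot2] at this
    · exact hrotR t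
  have hRT : ∀ t : Tri, t ∈ TRegion hu (N - hu) (↑(U' ∪ {c}) : Set ℤ) ↔
      (t ∈ HRegion N hu hu (↑U' : Set ℤ) ↑D' ∧ 0 ≤ t.2.1 ∧ t ≠ upc c) :=
    fun t => mem_TRegion_iff U' D' t
  have hupcR : upc c ∈ HRegion N hu hu (↑U' : Set ℤ) ↑D' := by
    have : ((c - 1 : ℤ), (0 : ℤ), false) ∈ HRegion N hu hu (↑U' : Set ℤ) ↑D' := by
      refine (mem_upper_up le_rfl).2 ⟨by omega, by omega, by omega, fun _ => ?_⟩
      rw [show c - 1 + 1 = c by ring]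
      exact hcU
    exact this
  have hdncR : dnc c ∈ HRegion N hu hu (↑U' : Set ℤ) ↑D' := by
    show ((c - 1 : ℤ), (-1 : ℤ), true) ∈ HRegion N hu hu (↑U' : Set ℤ) ↑D'
    refine Or.inr (Or.inr (Or.inr ⟨rfl, show -hu ≤ -1 by omega, show (-1:ℤ) ≤ -1 by omega,
      show -(-1) - 1 ≤ c - 1 by omega, show c - 1 ≤ N - 1 by omega, fun _ => ?_⟩))
    show c - 1 + 1 ∉ (↑D' : Set ℤ)
    rw [show c - 1 + 1 = c by ring]
    exact hcD
  have hupcRT : upc c ∉ TRegion hu (N - hu) (↑(U' ∪ {c}) : Set ℤ) := by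
    rw [hRT]
    rintro ⟨-, -, h⟩
    exact h rfl
  have hdncRT : dnc c ∉ TRegion hu (N - hu) (↑(U' ∪ {c}) : Set ℤ) := by
    rw [hRT]
    rintro ⟨-, h, -⟩
    rw [dnc_row] at h
    omega
  have hadjud : adj (upc c) (dnc c) :=
    Or.inl ⟨rfl, rfl, Or.inr (Or.inr ⟨rfl, show (-1 : ℤ) = 0 - 1 by norm_num⟩)⟩
  -- Φ is well-defined
  have hPhi : ∀ f : Tri → Tri, IsTiling (HRegion N hu hu ↑U' ↑D') (HBar ↑B') f →
      (∀ t, f (rot (N,0) t) = rot (N,0) (f t)) →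
      IsTiling (TRegion hu (N - hu) ↑(U' ∪ {c})) ∅
        (PhiMap (TRegion hu (N - hu) ↑(U' ∪ {c})) f) := by
    intro f hf hsymm
    have hcross := cross_unique hN hhu huN hcard hUrange hUD hf hsymm
    obtain ⟨hout, hin⟩ := hf
    constructor
    · intro t ht
      exact PhiMap_neg ht
    · intro t ht
      obtain ⟨htR1, htb, htne⟩ := (hRT t).1 ht
      obtain ⟨hfR, hadj, hff, -, -⟩ := hin t htR1
      have hftRT : f t ∈ TRegion hu (N - hu) (↑(U' ∪ {c}) : Set ℤ) := by
        rw [hRT]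
        refine ⟨hfR, ?_, ?_⟩
        · cases hor : t.2.2
          · have hsh := adj_up_shape hor hadj
            by_contra hneg
            exact htne (hcross.2 t htR1 hor htb hneg)
          · have hsh := adj_down_shape hor hadj
            rcases hsh.2 with he | he <;> omega
        · intro heq
          have h1 : f (f t) = f (upc c) := by rw [heq]
          rw [hff, hcross.1] at h1
          rw [h1, dnc_row] at htb
          omega
      rw [PhiMap_pos ht]
      refine ⟨hftRT, hadj, ?_, Set.notMem_empty _, Set.notMem_empty _⟩
      rw [PhiMap_pos hftRT]
      exact hff
  -- Ψ is well-defined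
  have hPsi : ∀ g : Tri → Tri, IsTiling (TRegion hu (N - hu) ↑(U' ∪ {c})) ∅ g →
      IsTiling (HRegion N hu hu ↑U' ↑D') (HBar ↑B') (PsiMap N c g) ∧
      (∀ t, PsiMap N c g (rot (N,0) t) = rot (N,0) (PsiMap N c g t)) := by
    intro g hg
    obtain ⟨gout, gin⟩ := hg
    refine ⟨⟨?_, ?_⟩, ?_⟩
    · -- identity off the region
      intro t htR
      have h1 : t ≠ upc c := fun h => htR (h ▸ hupcR)
      have h2 : t ≠ dnc c := fun h => htR (h ▸ hdncR)
      by_cases hb : 0 ≤ t.2.1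
      · rw [PsiMap_pos hb h1]
        apply gout
        rw [hRT]
        rintro ⟨hmem, -, -⟩
        exact htR hmem
      · rw [PsiMap_neg hb h2]
        have hnot : rot (N,0) t ∉ TRegion hu (N - hu) (↑(U' ∪ {c}) : Set ℤ) := by
          rw [hRT]
          rintro ⟨hmem, -, -⟩
          exact htR ((hrotR_iff t).1 hmem)
        rw [gout _ hnot, hrot2]
    · -- tiling conditions on the region
      intro t htR
      by_cases h1 : t = upc c
      · subst h1
        rw [PsiMap_upc]
        refine ⟨hdncR, hadjud, ?_, upc_not_bar hcB, dnc_not_bar hcB⟩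
        rw [PsiMap_dnc]
      by_cases h2 : t = dnc c
      · subst h2
        rw [PsiMap_dnc]
        refine ⟨hupcR, Or.inr ⟨rfl, rfl, Or.inr (Or.inr ⟨rfl,
          show (-1 : ℤ) = 0 - 1 by norm_num⟩)⟩, ?_, dnc_not_bar hcB, upc_not_bar hcB⟩
        rw [PsiMap_upc]
      by_cases hb : 0 ≤ t.2.1
      · have htRT : t ∈ TRegion hu (N - hu) (↑(U' ∪ {c}) : Set ℤ) := (hRT t).2 ⟨htR, hb, h1⟩
        rw [PsiMap_pos hb h1]
        obtain ⟨hgt, hadj, hgg, -, -⟩ := gin t htRT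
        obtain ⟨hgtR, hgtb, hgtne⟩ := (hRT _).1 hgt
        refine ⟨hgtR, hadj, ?_, ?_, ?_⟩
        · rw [PsiMap_pos hgtb hgtne]
          exact hgg
        · intro hmem
          rcases HBar_rows hmem with ⟨hp, hq⟩ | ⟨hp, hq⟩ <;> omega
        · intro hmem
          rcases HBar_rows hmem with ⟨hp, hq⟩ | ⟨hp, hq⟩ <;> omega
      · have hrtR : rot (N,0) t ∈ HRegion N hu hu (↑U' : Set ℤ) ↑D' := hrotR _ htR
        have hrt_ne : rot (N,0) t ≠ upc c := by
          intro h
          apply h2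
          have h' := congrArg (rot (N,0)) h
          rwa [hrot2, rot_upc N c hN] at h'
        have hrtb : 0 ≤ (rot (N,0) t).2.1 := by
          rw [rot_row]
          omega
        have hrtRT : rot (N,0) t ∈ TRegion hu (N - hu) (↑(U' ∪ {c}) : Set ℤ) :=
          (hRT _).2 ⟨hrtR, hrtb, hrt_ne⟩
        rw [PsiMap_neg hb h2]
        obtain ⟨hg1, hadjr, hgg, -, -⟩ := gin _ hrtRT
        obtain ⟨hgmemR, hgrow, -⟩ := (hRT _).1 hg1
        have hqrow : (rot (N,0) (g (rot (N,0) t))).2.1 = 0 - (g (rot (N,0) t)).2.1 - 1 :=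
          rot_row _
        refine ⟨hrotR _ hgmemR, ?_, ?_, ?_, ?_⟩
        · have h' := adj_rot (N := N) hadjr
          rwa [hrot2] at h'
        · have hqneg : ¬ 0 ≤ (rot (N,0) (g (rot (N,0) t))).2.1 := by omega
          have hq_ne : rot (N,0) (g (rot (N,0) t)) ≠ dnc c := by
            intro h
            have h' := congrArg (rot (N,0)) h
            rw [hrot2, rot_dnc N c hN] at h'
            exact hupcRT (h' ▸ hg1)
          rw [PsiMap_neg hqneg hq_ne, hrot2, hgg, hrot2]
        · intro hmem
          rcases HBar_rows hmem with ⟨hp, hq⟩ | ⟨hp, hq⟩ <;> omega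
        · intro hmem
          rcases HBar_rows hmem with ⟨hp, hq⟩ | ⟨hp, hq⟩ <;> omega
    · -- equivariance of Ψ g
      intro t
      by_cases h1 : t = upc c
      · subst h1
        rw [rot_upc N c hN, PsiMap_dnc, PsiMap_upc, rot_dnc N c hN]
      by_cases h2 : t = dnc c
      · subst h2
        rw [rot_dnc N c hN, PsiMap_upc, PsiMap_dnc, rot_upc N c hN]
      by_cases hb : 0 ≤ t.2.1
      · have hrb : ¬ 0 ≤ (rot (N,0) t).2.1 := by rw [rot_row]; omega
        have hrne : rot (N,0) t ≠ dnc c := by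
          intro h
          apply h1
          have h' := congrArg (rot (N,0)) h
          rwa [hrot2, rot_dnc N c hN] at h'
        rw [PsiMap_neg hrb hrne, hrot2, PsiMap_pos hb h1]
      · have hrb : 0 ≤ (rot (N,0) t).2.1 := by rw [rot_row]; omega
        have hrne : rot (N,0) t ≠ upc c := by
          intro h
          apply h2
          have h' := congrArg (rot (N,0)) h
          rwa [hrot2, rot_upc N c hN] at h'
        rw [PsiMap_pos hrb hrne, PsiMap_neg hb h2, hrot2]
  -- Ψ ∘ Φ = id
  have hPsiPhi : ∀ f : Tri → Tri, IsTiling (HRegion N hu hu ↑U' ↑D') (HBar ↑B') f →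
      (∀ t, f (rot (N,0) t) = rot (N,0) (f t)) →
      PsiMap N c (PhiMap (TRegion hu (N - hu) ↑(U' ∪ {c})) f) = f := by
    intro f hf hsymm
    have hcross := cross_unique hN hhu huN hcard hUrange hUD hf hsymm
    obtain ⟨hout, hin⟩ := hf
    funext t
    by_cases h1 : t = upc c
    · subst h1
      rw [PsiMap_upc, hcross.1]
    by_cases h2 : t = dnc c
    · subst h2
      rw [PsiMap_dnc]
      have hfd : f (dnc c) = upc c := by
        rw [← hcross.1]
        exact (hin _ hupcR).2.2.1
      rw [hfd]
    by_cases hb : 0 ≤ t.2.1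
    · rw [PsiMap_pos hb h1]
      by_cases ht : t ∈ TRegion hu (N - hu) (↑(U' ∪ {c}) : Set ℤ)
      · rw [PhiMap_pos ht]
      · rw [PhiMap_neg ht]
        have hnR : t ∉ HRegion N hu hu (↑U' : Set ℤ) ↑D' :=
          fun hR => ht ((hRT t).2 ⟨hR, hb, h1⟩)
        rw [hout t hnR]
    · rw [PsiMap_neg hb h2]
      by_cases hrt : rot (N,0) t ∈ TRegion hu (N - hu) (↑(U' ∪ {c}) : Set ℤ)
      · rw [PhiMap_pos hrt, hsymm t, hrot2]
      · rw [PhiMap_neg hrt, hrot2]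
        have hrtb : 0 ≤ (rot (N,0) t).2.1 := by rw [rot_row]; omega
        have hrne : rot (N,0) t ≠ upc c := by
          intro h
          apply h2
          have h' := congrArg (rot (N,0)) h
          rwa [hrot2, rot_upc N c hN] at h'
        have hnR : rot (N,0) t ∉ HRegion N hu hu (↑U' : Set ℤ) ↑D' :=
          fun hR => hrt ((hRT _).2 ⟨hR, hrtb, hrne⟩)
        have htnR : t ∉ HRegion N hu hu (↑U' : Set ℤ) ↑D' :=
          fun hR => hnR (hrotR _ hR)
        rw [hout t htnR]
  -- Φ ∘ Ψ = id
  have hPhiPsi : ∀ g : Tri → Tri, IsTiling (TRegion hu (N - hu) ↑(U' ∪ {c})) ∅ g →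
      PhiMap (TRegion hu (N - hu) ↑(U' ∪ {c})) (PsiMap N c g) = g := by
    intro g hg
    funext t
    by_cases ht : t ∈ TRegion hu (N - hu) (↑(U' ∪ {c}) : Set ℤ)
    · rw [PhiMap_pos ht]
      obtain ⟨-, hb, h1⟩ := (hRT t).1 ht
      rw [PsiMap_pos hb h1]
    · rw [PhiMap_neg ht]
      exact (hg.1 t ht).symm
  -- conclude
  rw [Mc, M]
  exact Nat.card_congr
    ⟨fun p => ⟨PhiMap (TRegion hu (N - hu) ↑(U' ∪ {c})) p.1, hPhi p.1 p.2.1 p.2.2⟩,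
     fun q => ⟨PsiMap N c q.1, hPsi q.1 q.2⟩,
     fun p => Subtype.ext (hPsiPhi p.1 p.2.1 p.2.2),
     fun q => Subtype.ext (hPhiPsi q.1 q.2)⟩

/-- base case `y = 1`. -/
theorem stmt15 (x : ℕ) (hx : Even x) (U D B : Finset ℤ)
    (n : ℕ) (hn : n = (U ∪ D).card) (N : ℕ) (hN : N = x + 1 + 2 * n)
    (m : ℕ) (hm : m = 2 * n - U.card - D.card)
    (hU : U ⊆ Icc 1 ((N / 2 : ℕ) : ℤ)) (hD : D ⊆ Icc 1 ((N / 2 : ℕ) : ℤ))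
    (hB : B ⊆ Icc 1 ((N / 2 : ℕ) : ℤ))
    (hBd : B ∩ (U ∪ D) = ∅) (hBcard : 2 * B.card ≤ x)
    (hmid : (((N + 1) / 2 : ℕ) : ℤ) ∉ U ∪ D ∪ B) :
    McCS x 1 U D B =
      MT ((1 + U.card + D.card : ℕ) : ℤ) ((x + m : ℕ) : ℤ)
        (U ∪ mir (N : ℤ) D ∪ {(((N + 1) / 2 : ℕ) : ℤ)}) := by
  have hun : U.card ≤ n := by
    rw [hn]; exact card_le_card subset_union_left
  have hdn : D.card ≤ n := by
    rw [hn]; exact card_le_card subset_union_right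
  have hNodd : N % 2 = 1 := by
    obtain ⟨k, hk⟩ := hx
    omega
  have hNc : (N : ℤ) = 2 * ((((N + 1) / 2 : ℕ)) : ℤ) - 1 := by omega
  have hhalf : ((N / 2 : ℕ) : ℤ) = ((((N + 1) / 2 : ℕ)) : ℤ) - 1 := by omega
  simp only [mem_union, not_or] at hmid
  obtain ⟨⟨hcU0, hcD0⟩, hcB0⟩ := hmid
  have hUr : ∀ i ∈ U, 1 ≤ i ∧ i ≤ ((((N + 1) / 2 : ℕ)) : ℤ) - 1 := by
    intro i hi
    have := hU hi
    rw [mem_Icc] at this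
    omega
  have hDr : ∀ i ∈ D, 1 ≤ i ∧ i ≤ ((((N + 1) / 2 : ℕ)) : ℤ) - 1 := by
    intro i hi
    have := hD hi
    rw [mem_Icc] at this
    omega
  have hBr : ∀ i ∈ B, 1 ≤ i ∧ i ≤ ((((N + 1) / 2 : ℕ)) : ℤ) - 1 := by
    intro i hi
    have := hB hi
    rw [mem_Icc] at this
    omega
  have hmirr : ∀ W : Finset ℤ, (∀ i ∈ W, 1 ≤ i ∧ i ≤ ((((N + 1) / 2 : ℕ)) : ℤ) - 1) →
      ∀ i ∈ mir (N : ℤ) W, ((((N + 1) / 2 : ℕ)) : ℤ) + 1 ≤ i ∧ i ≤ (N : ℤ) := by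
    intro W hW i hi
    rw [mem_mir] at hi
    have := hW _ hi
    omega
  have hmircard : ∀ W : Finset ℤ, (mir (N : ℤ) W).card = W.card := by
    intro W
    exact Finset.card_image_of_injective _ (fun a b h => by omega)
  have hdUD : Disjoint U (mir (N : ℤ) D) := by
    rw [disjoint_left]
    intro i hiU hiM
    have h1 := hUr _ hiU
    have h2 := hmirr D hDr _ hiM
    omega
  have hdDU : Disjoint D (mir (N : ℤ) U) := by
    rw [disjoint_left]
    intro i hiU hiM
    have h1 := hDr _ hiU
    have h2 := hmirr U hUr _ hiM
    omega
  have hdBB : Disjoint B (mir (N : ℤ) B) := by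
    rw [disjoint_left]
    intro i hiU hiM
    have h1 := hBr _ hiU
    have h2 := hmirr B hBr _ hiM
    omega
  have hUDr : ∀ i ∈ U ∪ D, 1 ≤ i ∧ i ≤ ((((N + 1) / 2 : ℕ)) : ℤ) - 1 := by
    intro i hi
    rcases mem_union.1 hi with h | h
    · exact hUr _ h
    · exact hDr _ h
  have hdAll : Disjoint (U ∪ D) (mir (N : ℤ) (U ∪ D)) := by
    rw [disjoint_left]
    intro i hiU hiM
    have h1 := hUDr _ hiU
    have h2 := hmirr _ hUDr _ hiM
    omega
  have hB1 : (U ∪ mir (N : ℤ) D).card = U.card + D.card := by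
    rw [card_union_of_disjoint hdUD, hmircard]
  have hB2 : (D ∪ mir (N : ℤ) U).card = D.card + U.card := by
    rw [card_union_of_disjoint hdDU, hmircard]
  have hA : ((U ∪ mir (N : ℤ) D) ∪ (D ∪ mir (N : ℤ) U)).card = 2 * n := by
    have hset : (U ∪ mir (N : ℤ) D) ∪ (D ∪ mir (N : ℤ) U)
        = (U ∪ D) ∪ mir (N : ℤ) (U ∪ D) := by
      have himg : mir (N : ℤ) (U ∪ D) = mir (N : ℤ) U ∪ mir (N : ℤ) D :=
        Finset.image_union _ _
      rw [himg]
      ext i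
      simp only [mem_union]
      tauto
    rw [hset, card_union_of_disjoint hdAll, hmircard, ← hn]
    omega
  have hUD' : mir (N : ℤ) (U ∪ mir (N : ℤ) D) = D ∪ mir (N : ℤ) U := by
    have himg : mir (N : ℤ) (U ∪ mir (N : ℤ) D)
        = mir (N : ℤ) U ∪ mir (N : ℤ) (mir (N : ℤ) D) := Finset.image_union _ _
    rw [himg, mir_mir, union_comm]
  have hBB' : mir (N : ℤ) (B ∪ mir (N : ℤ) B) = B ∪ mir (N : ℤ) B := by
    have himg : mir (N : ℤ) (B ∪ mir (N : ℤ) B)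
        = mir (N : ℤ) B ∪ mir (N : ℤ) (mir (N : ℤ) B) := Finset.image_union _ _
    rw [himg, mir_mir, union_comm]
  have hcU' : (((N + 1) / 2 : ℕ) : ℤ) ∉ U ∪ mir (N : ℤ) D := by
    rw [mem_union]
    rintro (h | h)
    · exact hcU0 h
    · rw [mem_mir] at h
      have : ((N : ℤ)) + 1 - (((N + 1) / 2 : ℕ) : ℤ) = (((N + 1) / 2 : ℕ) : ℤ) := by omega
      rw [this] at h
      exact hcD0 h
  have hcD' : (((N + 1) / 2 : ℕ) : ℤ) ∉ D ∪ mir (N : ℤ) U := by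
    rw [mem_union]
    rintro (h | h)
    · exact hcD0 h
    · rw [mem_mir] at h
      have : ((N : ℤ)) + 1 - (((N + 1) / 2 : ℕ) : ℤ) = (((N + 1) / 2 : ℕ) : ℤ) := by omega
      rw [this] at h
      exact hcU0 h
  have hcB' : (((N + 1) / 2 : ℕ) : ℤ) ∉ B ∪ mir (N : ℤ) B := by
    rw [mem_union]
    rintro (h | h)
    · exact hcB0 h
    · rw [mem_mir] at h
      have : ((N : ℤ)) + 1 - (((N + 1) / 2 : ℕ) : ℤ) = (((N + 1) / 2 : ℕ) : ℤ) := by omega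
      rw [this] at h
      exact hcB0 h
  have hUrange' : ∀ i ∈ U ∪ mir (N : ℤ) D, 1 ≤ i ∧ i ≤ (N : ℤ) := by
    intro i hi
    rcases mem_union.1 hi with h | h
    · have := hUr _ h
      omega
    · have := hmirr D hDr _ h
      omega
  simp only [McCS, MT]
  rw [show ((x : ℤ) + ((1 : ℕ) : ℤ) + 2 * (((U ∪ D).card : ℕ) : ℤ)) = (N : ℤ) by
    push_cast
    omega]
  rw [show ((U ∪ mir (N : ℤ) D) ∪ (D ∪ mir (N : ℤ) U)).card = 2 * n from hA]
  rw [show (U ∪ mir (N : ℤ) D).card = U.card + D.card from hB1]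
  rw [show (D ∪ mir (N : ℤ) U).card = D.card + U.card from hB2]
  rw [show ((x : ℤ) + ((1 : ℕ) : ℤ) + ((2 * n : ℕ) : ℤ)) = (N : ℤ) by
    push_cast
    omega]
  rw [show (((1 : ℕ) : ℤ) + ((U.card + D.card : ℕ) : ℤ)) = ((1 + U.card + D.card : ℕ) : ℤ) by
    push_cast
    ring]
  rw [show (((1 : ℕ) : ℤ) + ((D.card + U.card : ℕ) : ℤ)) = ((1 + U.card + D.card : ℕ) : ℤ) by
    push_cast
    ring]
  rw [show ((x + m : ℕ) : ℤ) = (N : ℤ) - ((1 + U.card + D.card : ℕ) : ℤ) by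
    push_cast [hm]
    omega]
  exact key (N : ℤ) (((N + 1) / 2 : ℕ) : ℤ) ((1 + U.card + D.card : ℕ) : ℤ)
    (U ∪ mir (N : ℤ) D) (D ∪ mir (N : ℤ) U) (B ∪ mir (N : ℤ) B)
    hNc (by push_cast; omega) (by push_cast; omega)
    (by rw [hB1]; push_cast; ring) hUrange' hUD' hBB' hcU' hcD' hcB'

end Shuf
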